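/- Let n ≥ 1 and let W_n be the n-uplinked mutual dyad over a field F. Then the dimension-1 path homology of W_n is trivial: H_1(W_n) = 0, i.e., ker ∂_1 = im ∂_2. -/

import Mathlib

open Finset

/-- The non-regular boundary operator `∂_[p] : R^{V^{p+1}} → R^{V^p}`.
It is the linear map acting on the standard basis by
`∂_[p] e_{(v_0,…,v_p)} = ∑_{j=0}^p (−1)^j e_{(v_0,…,v̂_j,…,v_p)}`,
where `v̂_j` means that the entry `v_j` is omitted from the tuple
(here `fun i => x (j.succAbove i)` is the tuple `x` with its `j`-th entry dropped). -/
noncomputable def pathBoundary (R V : Type) [CommRing R] [Fintype V] [DecidableEq V]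
    (p : ℕ) : ((Fin (p + 1) → V) → R) →ₗ[R] ((Fin p → V) → R) where
  toFun f := fun w => ∑ x : Fin (p + 1) → V,
    (∑ j : Fin (p + 1), (-1 : R) ^ (j : ℕ) *
      (if (fun i => x (j.succAbove i)) = w then 1 else 0)) * f x
  map_add' f g := by
    funext w
    simp [mul_add, Finset.sum_add_distrib]
  map_smul' r f := by
    funext w
    simp [Finset.mul_sum, mul_left_comm]

/-- A tuple of vertices is an allowed path when each consecutive pair is an arc. -/
def IsAllowed {V : Type} (A : V → V → Prop) {q : ℕ} (x : Fin q → V) : Prop :=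
  ∀ (i : ℕ) (h : i + 1 < q), A (x ⟨i, Nat.lt_of_succ_lt h⟩) (x ⟨i + 1, h⟩)

/-- `R^{𝒜}`: the subspace of `R^{V^q}` of functions supported on allowed paths
(`q` is the number of vertices in the tuple, so this is `R^{𝒜_{q-1}}`). -/
def allowedSubmodule (R V : Type) [CommRing R] (A : V → V → Prop) (q : ℕ) :
    Submodule R ((Fin q → V) → R) where
  carrier := {f | ∀ x, ¬ IsAllowed A x → f x = 0}
  add_mem' := fun hf hg x hx => by simp only [Pi.add_apply, hf x hx, hg x hx, add_zero]
  zero_mem' := fun x hx => rfl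
  smul_mem' := fun c f hf x hx => by simp only [Pi.smul_apply, hf x hx, smul_zero]

/-- `Ω_p`, the space of invariant `p`-paths:
`Ω_p = {ω ∈ R^{𝒜_p} : ∂_[p] ω ∈ R^{𝒜_{p−1}}}`. -/
noncomputable def invariantPaths (R V : Type) [CommRing R] [Fintype V] [DecidableEq V]
    (A : V → V → Prop) (p : ℕ) : Submodule R ((Fin (p + 1) → V) → R) :=
  allowedSubmodule R V A (p + 1) ⊓ (allowedSubmodule R V A p).comap (pathBoundary R V p)

/-- The cycles `Z_p = ker ∂_p` of the path complex `(Ω_p, ∂_p)`, `∂_p = ∂_[p]|_{Ω_p}`.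
In degree `0` the complex ends at `Ω_0` (the differential out of `Ω_0` is zero),
so `Z_0 = Ω_0`. -/
noncomputable def pathCycles (R V : Type) [CommRing R] [Fintype V] [DecidableEq V]
    (A : V → V → Prop) : (p : ℕ) → Submodule R ((Fin (p + 1) → V) → R)
  | 0 => invariantPaths R V A 0
  | p + 1 => invariantPaths R V A (p + 1) ⊓ LinearMap.ker (pathBoundary R V (p + 1))

/-- The boundaries `B_p = im ∂_{p+1} = ∂_[p+1](Ω_{p+1})`. -/
noncomputable def pathBoundaries (R V : Type) [CommRing R] [Fintype V] [DecidableEq V]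
    (A : V → V → Prop) (p : ℕ) : Submodule R ((Fin (p + 1) → V) → R) :=
  Submodule.map (pathBoundary R V (p + 1)) (invariantPaths R V A (p + 1))

/-- The path homology `H_p = Z_p / B_p` of the digraph `(V, A)` with coefficients in `R`. -/
abbrev pathHomology (R V : Type) [CommRing R] [Fintype V] [DecidableEq V]
    (A : V → V → Prop) (p : ℕ) : Type :=
  pathCycles R V A p ⧸ (pathBoundaries R V A p).comap (pathCycles R V A p).subtype

/-- The Betti numbers `β_p = dim H_p`. -/
noncomputable def betti (F V : Type) [Field F] [Fintype V] [DecidableEq V]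
    (A : V → V → Prop) (p : ℕ) : ℕ :=
  Module.finrank F (pathHomology F V A p)

/-- The reduced Betti numbers `β̃_p = β_p − δ_{p0}` (as integers). -/
noncomputable def tildeBetti (F V : Type) [Field F] [Fintype V] [DecidableEq V]
    (A : V → V → Prop) (p : ℕ) : ℤ :=
  (betti F V A p : ℤ) - (if p = 0 then 1 else 0)

/-- For `n ≥ 1`, the `n`-uplinked mutual dyad `W_n` has vertex set `{a, b, 1, …, n}`
(realized as `Fin 2 ⊕ Fin n`, with `a = Sum.inl 0` and `b = Sum.inl 1`) and arc set
`{(a,b), (b,a)} ∪ {(a,i) : 1 ≤ i ≤ n} ∪ {(b,i) : 1 ≤ i ≤ n}`. -/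
def uplinkArc (n : ℕ) : (Fin 2 ⊕ Fin n) → (Fin 2 ⊕ Fin n) → Prop
  | Sum.inl i, Sum.inl j => i ≠ j
  | Sum.inl _, Sum.inr _ => True
  | Sum.inr _, _ => False

/-- The `n`-downlinked mutual dyad: the `n`-uplinked mutual dyad with all arcs reversed. -/
def downlinkArc (n : ℕ) (u v : Fin 2 ⊕ Fin n) : Prop := uplinkArc n v u

section Aux

variable {R V : Type} [CommRing R] [Fintype V] [DecidableEq V]

lemma pathBoundary_apply (p : ℕ) (f : (Fin (p + 1) → V) → R) (w : Fin p → V) :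
    pathBoundary R V p f w
      = ∑ j : Fin (p + 1), (-1 : R) ^ (j : ℕ) * ∑ v : V, f (j.insertNth v w) := by
  simp only [pathBoundary, LinearMap.coe_mk, AddHom.coe_mk]
  simp only [Finset.sum_mul, mul_assoc]
  rw [Finset.sum_comm]
  refine Finset.sum_congr rfl fun j _ => ?_
  rw [Finset.mul_sum]
  rw [← (Fin.insertNthEquiv (fun _ => V) j).sum_comp
      (fun x => (-1:R)^(j:ℕ) * ((if (fun i => x (j.succAbove i)) = w then (1:R) else 0) * f x))]
  rw [Fintype.sum_prod_type]
  refine Finset.sum_congr rfl fun v _ => ?_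
  simp only [Fin.insertNthEquiv_apply, Fin.insertNth_apply_succAbove]
  simp [ite_mul, Finset.sum_ite_eq', Fin.insertNthEquiv]

lemma insert20 (v : V) (w : Fin 1 → V) : (0:Fin 2).insertNth v w = ![v, w 0] := by
  funext i; fin_cases i <;> (try simp [Fin.insertNth_zero', Fin.cons]) <;> (try rfl)
lemma insert21 (v : V) (w : Fin 1 → V) : (1:Fin 2).insertNth v w = ![w 0, v] := by
  funext i; fin_cases i <;> (try simp [Fin.insertNth, Fin.succAboveCases, Fin.cons]) <;> (try rfl)
lemma insert30 (v : V) (w : Fin 2 → V) : (0:Fin 3).insertNth v w = ![v, w 0, w 1] := by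
  funext i; fin_cases i <;> (try simp [Fin.insertNth_zero', Fin.cons]) <;> (try rfl)
lemma insert31 (v : V) (w : Fin 2 → V) : (1:Fin 3).insertNth v w = ![w 0, v, w 1] := by
  funext i; fin_cases i <;> (try simp [Fin.insertNth, Fin.succAboveCases, Fin.cons]) <;> (try rfl)
lemma insert32 (v : V) (w : Fin 2 → V) : (2:Fin 3).insertNth v w = ![w 0, w 1, v] := by
  funext i; fin_cases i <;> (try simp [Fin.insertNth, Fin.succAboveCases, Fin.cons]) <;> (try rfl)

lemma pathBoundary_one (f : (Fin 2 → V) → R) (w : Fin 1 → V) :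
    pathBoundary R V 1 f w = (∑ v : V, f ![v, w 0]) - ∑ v : V, f ![w 0, v] := by
  rw [pathBoundary_apply, Fin.sum_univ_two]
  simp only [insert20, insert21, Fin.val_zero, Fin.val_one, pow_zero, pow_one]
  ring

lemma pathBoundary_two (f : (Fin 3 → V) → R) (w : Fin 2 → V) :
    pathBoundary R V 2 f w
      = (∑ v : V, f ![v, w 0, w 1]) - (∑ v : V, f ![w 0, v, w 1]) + ∑ v : V, f ![w 0, w 1, v] := by
  rw [pathBoundary_apply, Fin.sum_univ_three]
  simp only [insert30, insert31, insert32, Fin.val_zero, Fin.val_one, Fin.val_two,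
    pow_zero, pow_one]
  ring_nf

lemma pathBoundary_comp (f : (Fin 3 → V) → R) :
    pathBoundary R V 1 (pathBoundary R V 2 f) = 0 := by
  funext w
  rw [pathBoundary_one, Pi.zero_apply]
  simp only [pathBoundary_two, Matrix.cons_val_zero, Matrix.cons_val_one, Matrix.head_cons]
  rw [Finset.sum_add_distrib, Finset.sum_sub_distrib,
    Finset.sum_add_distrib, Finset.sum_sub_distrib]
  have h1 : ∑ v : V, ∑ u : V, f ![u, v, w 0] = ∑ v : V, ∑ u : V, f ![v, u, w 0] :=
    Finset.sum_comm
  have h2 : ∑ v : V, ∑ u : V, f ![v, w 0, u] = ∑ v : V, ∑ u : V, f ![u, w 0, v] :=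
    Finset.sum_comm
  have h3 : ∑ v : V, ∑ u : V, f ![w 0, u, v] = ∑ v : V, ∑ u : V, f ![w 0, v, u] :=
    Finset.sum_comm
  linear_combination h1 + h2 + h3

lemma mem_allowed_one (A : V → V → Prop) (f : (Fin 1 → V) → R) :
    f ∈ allowedSubmodule R V A 1 :=
  fun _ hx => absurd (fun i h => absurd h (by omega)) hx

lemma isAllowed_two {A : V → V → Prop} {x : Fin 2 → V} : IsAllowed A x ↔ A (x 0) (x 1) := by
  constructor
  · intro h; exact h 0 (by omega)
  · intro h i hi
    have : i = 0 := by omega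
    subst this
    exact h

lemma isAllowed_three {A : V → V → Prop} {x : Fin 3 → V} :
    IsAllowed A x ↔ A (x 0) (x 1) ∧ A (x 1) (x 2) := by
  constructor
  · intro h; exact ⟨h 0 (by omega), h 1 (by omega)⟩
  · rintro ⟨h1, h2⟩ i hi
    rcases (by omega : i = 0 ∨ i = 1) with rfl | rfl
    exacts [h1, h2]

lemma sum_ite_and_right (P : Prop) [Decidable P] (x : V) (t : R) :
    ∑ v : V, (if v = x ∧ P then t else 0) = if P then t else 0 := by
  by_cases hP : P <;> simp [hP, Finset.sum_ite_eq']

lemma sum_ite_and_left (P : Prop) [Decidable P] (x : V) (t : R) :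
    ∑ v : V, (if P ∧ v = x then t else 0) = if P then t else 0 := by
  by_cases hP : P <;> simp [hP, Finset.sum_ite_eq']

lemma sum_ite_const (P : Prop) [Decidable P] (h : V → R) :
    ∑ v : V, (if P then h v else 0) = if P then ∑ v : V, h v else 0 := by
  by_cases hP : P <;> simp [hP]

end Aux

/-- auxiliary 2-chain used to fill cycles in the uplinked dyad -/
def gmap (R V : Type) [CommRing R] [DecidableEq V] (a b : V) (h1 h2 : V → R) :
    (Fin 3 → V) → R := fun x =>
  (if x 0 = a ∧ x 1 = b then h1 (x 2) else 0) + (if x 0 = b ∧ x 1 = a then h2 (x 2) else 0)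

section GmapSums

variable {R V : Type} [CommRing R] [Fintype V] [DecidableEq V] (a b : V) (h1 h2 : V → R)

lemma gmap_sum1 (u v : V) :
    ∑ x : V, gmap R V a b h1 h2 ![x, u, v]
      = (if u = b then h1 v else 0) + (if u = a then h2 v else 0) := by
  simp only [gmap, Matrix.cons_val_zero, Matrix.cons_val_one, Matrix.head_cons,
    Matrix.cons_val_two, Matrix.tail_cons]
  rw [Finset.sum_add_distrib, sum_ite_and_right, sum_ite_and_right]

lemma gmap_sum2 (u v : V) :
    ∑ x : V, gmap R V a b h1 h2 ![u, x, v]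
      = (if u = a then h1 v else 0) + (if u = b then h2 v else 0) := by
  simp only [gmap, Matrix.cons_val_zero, Matrix.cons_val_one, Matrix.head_cons,
    Matrix.cons_val_two, Matrix.tail_cons]
  rw [Finset.sum_add_distrib, sum_ite_and_left, sum_ite_and_left]

lemma gmap_sum3 (u v : V) :
    ∑ x : V, gmap R V a b h1 h2 ![u, v, x]
      = (if u = a ∧ v = b then ∑ x : V, h1 x else 0)
        + (if u = b ∧ v = a then ∑ x : V, h2 x else 0) := by
  simp only [gmap, Matrix.cons_val_zero, Matrix.cons_val_one, Matrix.head_cons,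
    Matrix.cons_val_two, Matrix.tail_cons]
  rw [Finset.sum_add_distrib, sum_ite_const, sum_ite_const]

end GmapSums

/-- For `n ≥ 1` and `W_n` the `n`-uplinked mutual dyad over a field `F`,
the dimension-1 path homology of `W_n` is trivial: `H_1(W_n) = 0`, i.e.
`ker ∂_1 = im ∂_2`. -/
theorem uplinked_dyad_H1_trivial (F : Type) [Field F] (n : ℕ) (hn : 1 ≤ n) :
    invariantPaths F (Fin 2 ⊕ Fin n) (uplinkArc n) 1
          ⊓ LinearMap.ker (pathBoundary F (Fin 2 ⊕ Fin n) 1)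
        = pathBoundaries F (Fin 2 ⊕ Fin n) (uplinkArc n) 1
    ∧ Subsingleton (pathHomology F (Fin 2 ⊕ Fin n) (uplinkArc n) 1) := by
  set V := Fin 2 ⊕ Fin n with hV
  set A := uplinkArc n with hA
  have key : invariantPaths F V A 1 ⊓ LinearMap.ker (pathBoundary F V 1)
      = pathBoundaries F V A 1 := by
    apply le_antisymm
    · -- cycles ⊆ boundaries
      rintro f ⟨⟨hfA, -⟩, hker'⟩
      have hker : pathBoundary F V 1 f = 0 := hker'
      set a : V := Sum.inl 0 with ha
      set b : V := Sum.inl 1 with hb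
      have hzero : ∀ u v : V, ¬ A u v → f ![u, v] = 0 := by
        intro u v h
        refine hfA _ fun hAll => h ?_
        have := isAllowed_two.mp hAll
        simpa using this
      have hab : a ≠ b := by
        rw [ha, hb]; intro h; exact absurd (Sum.inl.inj h) (by decide)
      have faa : f ![a, a] = 0 := hzero _ _ (by simp [hA, uplinkArc, ha])
      have fbb : f ![b, b] = 0 := hzero _ _ (by simp [hA, uplinkArc, hb])
      have finr : ∀ (k : Fin n) (v : V), f ![Sum.inr k, v] = 0 := fun k v =>
        hzero _ _ (by simp [hA, uplinkArc])
      have rel : ∀ u : V, (∑ v : V, f ![v, u]) = ∑ v : V, f ![u, v] := by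
        intro u
        have h := congrFun hker ![u]
        rw [pathBoundary_one, Pi.zero_apply] at h
        simp only [Matrix.cons_val_zero] at h
        exact sub_eq_zero.mp h
      have sumV : ∀ h : V → F, (∑ v : V, h v)
          = h a + h b + ∑ k : Fin n, h (Sum.inr k) := by
        intro h
        rw [Fintype.sum_sum_type, Fin.sum_univ_two]
      have relk : ∀ k : Fin n, f ![b, Sum.inr k] = - f ![a, Sum.inr k] := by
        intro k
        have h := rel (Sum.inr k)
        rw [sumV, sumV] at h
        simp only [finr, Finset.sum_const_zero, add_zero] at h
        exact eq_neg_of_add_eq_zero_right h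
      have rela : f ![b, a] = f ![a, b] + ∑ k : Fin n, f ![a, Sum.inr k] := by
        have h := rel a
        rw [sumV, sumV] at h
        simp only [faa, finr, Finset.sum_const_zero, add_zero, zero_add] at h
        exact h
      have hba : b ≠ a := hab.symm
      have hra : ∀ k : Fin n, (Sum.inr k : V) ≠ a := by simp [ha]
      have hrb : ∀ k : Fin n, (Sum.inr k : V) ≠ b := by simp [hb]
      have hinr : ∀ u : V, u ≠ a → u ≠ b → ∃ k, u = Sum.inr k := by
        rintro (i | k) hua hub
        · fin_cases i
          · exact absurd ha.symm hua
          · exact absurd hb.symm hub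
        · exact ⟨k, rfl⟩
      set c : Fin n → F := fun i => if i = ⟨0, hn⟩ then f ![a, b] else 0 with hc
      set d : Fin n → F := fun i => c i + f ![a, Sum.inr i] with hd
      set h1 : V → F := Sum.elim (fun _ => (0:F)) c with hh1
      set h2 : V → F := Sum.elim (fun _ => (0:F)) d with hh2
      have h1a : h1 a = 0 := rfl
      have h1b : h1 b = 0 := rfl
      have h2a : h2 a = 0 := rfl
      have h2b : h2 b = 0 := rfl
      have h1r : ∀ k : Fin n, h1 (Sum.inr k) = c k := fun _ => rfl
      have h2r : ∀ k : Fin n, h2 (Sum.inr k) = d k := fun _ => rfl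
      have h1l : ∀ i : Fin 2, h1 (Sum.inl i) = 0 := fun _ => rfl
      have h2l : ∀ i : Fin 2, h2 (Sum.inl i) = 0 := fun _ => rfl
      have sumc : ∑ k : Fin n, c k = f ![a, b] := by
        simp [hc, Finset.sum_ite_eq']
      have sumh1 : ∑ x : V, h1 x = f ![a, b] := by
        rw [sumV, h1a, h1b]
        simp [h1r, sumc]
      have sumh2 : ∑ x : V, h2 x = f ![b, a] := by
        rw [sumV, h2a, h2b]
        simp only [h2r, hd, Finset.sum_add_distrib, sumc, zero_add]
        exact rela.symm
      have hgeq : pathBoundary F V 2 (gmap F V a b h1 h2) = f := by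
        funext w
        rw [pathBoundary_two, gmap_sum1, gmap_sum2, gmap_sum3, sumh1, sumh2]
        have hw : f w = f ![w 0, w 1] := by
          congr 1
          funext i
          fin_cases i <;> rfl
        rw [hw]
        have main : ∀ u v : V,
            ((if u = b then h1 v else 0) + (if u = a then h2 v else 0))
              - ((if u = a then h1 v else 0) + (if u = b then h2 v else 0))
              + ((if u = a ∧ v = b then f ![a, b] else 0)
                + (if u = b ∧ v = a then f ![b, a] else 0))
            = f ![u, v] := by
          intro u v
          by_cases hua : u = a
          · subst hua
            by_cases hva : v = a
            · subst hva
              simp [hab, hba, h1a, h2a, faa]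
            · by_cases hvb : v = b
              · subst hvb
                simp [hab, hba, h1b, h2b]
              · obtain ⟨k, rfl⟩ := hinr v hva hvb
                have hdk : d k - c k = f ![a, Sum.inr k] := by rw [hd]; ring
                simp [hab, hba, hra k, hrb k, h1r, h2r, hdk]
          · by_cases hub : u = b
            · subst hub
              by_cases hva : v = a
              · subst hva
                simp [hab, hba, h1a, h2a]
              · by_cases hvb : v = b
                · subst hvb
                  simp [hab, hba, h1b, h2b, fbb]
                · obtain ⟨k, rfl⟩ := hinr v hva hvb
                  have hdk : c k - d k = - f ![a, Sum.inr k] := by rw [hd]; ring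
                  simp [hab, hba, hra k, hrb k, h1r, h2r, hdk, relk k]
            · obtain ⟨k, rfl⟩ := hinr u hua hub
              simp [hra k, hrb k, finr k v]
        exact main (w 0) (w 1)
      have hgA3 : gmap F V a b h1 h2 ∈ allowedSubmodule F V A 3 := by
        intro x hx
        by_cases h01 : x 0 = a ∧ x 1 = b
        · rcases hx2 : x 2 with i | k
          · simp [gmap, h01.1, h01.2, hab, hba, h1l, hx2]
          · exfalso
            apply hx
            rw [isAllowed_three]
            constructor
            · rw [h01.1, h01.2]
              simp [hA, uplinkArc, ha, hb]
            · rw [h01.2, hx2]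
              simp [hA, uplinkArc, hb]
        · by_cases h02 : x 0 = b ∧ x 1 = a
          · rcases hx2 : x 2 with i | k
            · simp [gmap, h02.1, h02.2, hab, hba, h2l, hx2]
            · exfalso
              apply hx
              rw [isAllowed_three]
              constructor
              · rw [h02.1, h02.2]
                simp [hA, uplinkArc, ha, hb]
              · rw [h02.2, hx2]
                simp [hA, uplinkArc, ha]
          · simp [gmap, h01, h02]
      have hmem2 : pathBoundary F V 2 (gmap F V a b h1 h2) ∈ allowedSubmodule F V A 2 := by
        rw [hgeq]
        exact hfA
      exact Submodule.mem_map.mpr ⟨gmap F V a b h1 h2, ⟨hgA3, hmem2⟩, hgeq⟩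
    · -- boundaries ⊆ cycles
      rintro f ⟨g, ⟨-, hg2⟩, rfl⟩
      refine ⟨⟨hg2, mem_allowed_one _ _⟩, ?_⟩
      exact pathBoundary_comp g
  refine ⟨key, ?_⟩
  have hc : pathCycles F V A 1
      = invariantPaths F V A 1 ⊓ LinearMap.ker (pathBoundary F V 1) := rfl
  rw [Submodule.Quotient.subsingleton_iff]
  rw [eq_top_iff]
  rintro ⟨x, hx⟩ -
  simp only [Submodule.mem_comap, Submodule.subtype_apply]
  rw [← key]
  exact hx
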